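/- Let M be a matroid on the ground set {1,...,n} and let B_i, B_j be bases of M with x^{B_j} <_lex x^{B_i}, i.e., the minimum element of the symmetric difference B_i Δ B_j belongs to B_i. Then there exist an element g ∈ B_j ∖ B_i and a basis B_k of M such that x^{B_k} <_lex x^{B_i} and B_k ∪ B_i = B_i ∪ {g}. (In monomial language: the squarefree matroidal ideal generated by the monomials x^B over the bases B of M is shellable with respect to the lexicographic order, since x_g·x^{B_i} = lcm(x^{B_k}, x^{B_i}) divides lcm(x^{B_j}, x^{B_i}).) -/

import Mathlib

open scoped symmDiff

/-- `lexLT B' B` encodes `x^{B'} <_lex x^{B}` in the lexicographic order with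
`x_1 > x_2 > … > x_n`: the minimum element of the symmetric difference `B ∆ B'`
belongs to `B`. -/
def lexLT {n : ℕ} (B' B : Finset (Fin n)) : Prop :=
  ∃ a ∈ B, a ∈ B ∆ B' ∧ ∀ b ∈ B ∆ B', a ≤ b

/-- Let `M` be a matroid on the ground set `{1,…,n}` and let `Bi, Bj` be
bases of `M` with `x^{Bj} <_lex x^{Bi}`.  Then there exist an element `g ∈ Bj ∖ Bi` and a
basis `Bk` of `M` such that `x^{Bk} <_lex x^{Bi}` and `Bk ∪ Bi = Bi ∪ {g}`.
(This says the squarefree matroidal ideal is shellable with respect to the lexicographic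
order, since `x_g·x^{Bi} = lcm(x^{Bk}, x^{Bi})` divides `lcm(x^{Bj}, x^{Bi})`.) -/
theorem stmt_2 {n : ℕ} (M : Matroid (Fin n)) (hE : M.E = Set.univ)
    (Bi Bj : Finset (Fin n)) (hBi : M.IsBase ↑Bi) (hBj : M.IsBase ↑Bj)
    (hlex : lexLT Bj Bi) :
    ∃ g ∈ Bj \ Bi, ∃ Bk : Finset (Fin n),
      M.IsBase ↑Bk ∧ lexLT Bk Bi ∧ Bk ∪ Bi = insert g Bi := by
  obtain ⟨a, haBi, haΔ, hamin⟩ := hlex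
  have haBj : a ∉ Bj := by
    rcases Finset.mem_symmDiff.mp haΔ with ⟨_, h⟩ | ⟨_, h⟩
    · exact h
    · exact absurd haBi h
  have hax : a ∈ (Bi : Set (Fin n)) \ (Bj : Set (Fin n)) := ⟨haBi, haBj⟩
  obtain ⟨g, hg, hBk⟩ := hBi.exchange hBj hax
  have hgBj : g ∈ Bj := hg.1
  have hgBi : g ∉ Bi := fun h => hg.2 h
  refine ⟨g, Finset.mem_sdiff.mpr ⟨hgBj, hgBi⟩, insert g (Bi.erase a), ?_, ?_, ?_⟩
  · have : ((insert g (Bi.erase a) : Finset (Fin n)) : Set (Fin n))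
        = insert g ((Bi : Set (Fin n)) \ {a}) := by
      simp [Finset.coe_insert, Finset.coe_erase]
    rw [this]; exact hBk
  · -- a ≤ g since g ∈ Bi ∆ Bj
    have hag : a ≤ g := hamin g (Finset.mem_symmDiff.mpr (Or.inr ⟨hgBj, hgBi⟩))
    have hne : a ≠ g := fun h => hgBi (h ▸ haBi)
    have hsub : Bi ∆ insert g (Bi.erase a) ⊆ {a, g} := by
      intro b hb
      rcases Finset.mem_symmDiff.mp hb with ⟨hb1, hb2⟩ | ⟨hb1, hb2⟩
      · have : b = a := by
          by_contra hba
          exact hb2 (Finset.mem_insert.mpr (Or.inr (Finset.mem_erase.mpr ⟨hba, hb1⟩)))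
        simp [this]
      · rcases Finset.mem_insert.mp hb1 with h | h
        · simp [h]
        · exact absurd (Finset.mem_of_mem_erase h) hb2
    refine ⟨a, haBi, Finset.mem_symmDiff.mpr (Or.inl ⟨haBi, ?_⟩), ?_⟩
    · intro h
      rcases Finset.mem_insert.mp h with h | h
      · exact hne h
      · exact (Finset.mem_erase.mp h).1 rfl
    · intro b hb
      rcases Finset.mem_insert.mp (hsub hb) with h | h
      · exact h ▸ le_refl a
      · exact (Finset.mem_singleton.mp h) ▸ hag
  · ext b
    simp only [Finset.mem_union, Finset.mem_insert, Finset.mem_erase]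
    constructor
    · rintro ((h | ⟨_, h⟩) | h) <;> tauto
    · rintro (h | h) <;> tauto
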